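/- Lipschitz continuity of the dynamic relay (Lemma 2.3): Let k > 0, u₁, u₂ ∈ L²(0,T), ξ₁, ξ₂ ∈ [−1,1], and let y₁, y₂ be the dynamic relay solutions for (u₁, ξ₁) and (u₂, ξ₂) respectively. Then max_{t∈[0,T]} |y₁(t) − y₂(t)| ≤ e^{T/2}·( |ξ₁ − ξ₂| + k·‖u₁ − u₂‖_{L²(0,T)} ). -/

import Mathlib

open MeasureTheory Set

/-- The function `g(u) = k·(u − ρ₂)⁺ − k·(ρ₁ − u)⁺` driving the dynamic relay. -/
noncomputable def relayG (ρ₁ ρ₂ k u : ℝ) : ℝ :=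
  k * max (u - ρ₂) 0 - k * max (ρ₁ - u) 0

/-- `y` (with a.e. derivative `y'`) is a dynamic relay solution on `[0,T]` for input `u`
and initial state `ξ`: `y ∈ H¹(0,T)` (encoded by `y' ∈ L²(0,T)` together with the
fundamental-theorem-of-calculus representation), `y(0) = ξ`, `|y| ≤ 1` on `[0,T]`, and
`q(t) := g(u(t)) − y'(t)` satisfies `q(t)(z − y(t)) ≤ 0` for all `z ∈ [−1,1]`, a.e. `t`. -/
def IsDynRelay (T ρ₁ ρ₂ k : ℝ) (u : ℝ → ℝ) (ξ : ℝ) (y y' : ℝ → ℝ) : Prop :=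
  MemLp y' 2 (volume.restrict (Ioc (0:ℝ) T)) ∧
  y 0 = ξ ∧
  (∀ t ∈ Icc (0:ℝ) T, y t = ξ + ∫ s in (0:ℝ)..t, y' s) ∧
  (∀ t ∈ Icc (0:ℝ) T, |y t| ≤ 1) ∧
  (∀ᵐ t ∂(volume.restrict (Ioo (0:ℝ) T)),
    ∀ z ∈ Icc (-1:ℝ) 1, (relayG ρ₁ ρ₂ k (u t) - y' t) * (z - y t) ≤ 0)

set_option maxHeartbeats 1000000

lemma relayG_sub_le (ρ₁ ρ₂ k : ℝ) (hρ : ρ₁ < ρ₂) (hk : 0 ≤ k) (a b : ℝ) :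
    relayG ρ₁ ρ₂ k a - relayG ρ₁ ρ₂ k b ≤ k * |a - b| := by
  have h1 := le_abs_self (a - b)
  have h2 := neg_abs_le (a - b)
  unfold relayG
  rcases le_total (a - ρ₂) 0 with h3 | h3 <;> rcases le_total (b - ρ₂) 0 with h4 | h4 <;>
    rcases le_total (ρ₁ - a) 0 with h5 | h5 <;> rcases le_total (ρ₁ - b) 0 with h6 | h6 <;>
    simp only [max_eq_right h3, max_eq_left h3, max_eq_right h4, max_eq_left h4,
      max_eq_right h5, max_eq_left h5, max_eq_right h6, max_eq_left h6] <;>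
    nlinarith [mul_nonneg hk (sub_pos.2 hρ).le, mul_le_mul_of_nonneg_left h1 hk,
      mul_le_mul_of_nonneg_left h2 hk]

lemma relayG_lipschitz (ρ₁ ρ₂ k : ℝ) (hρ : ρ₁ < ρ₂) (hk : 0 ≤ k) (a b : ℝ) :
    |relayG ρ₁ ρ₂ k a - relayG ρ₁ ρ₂ k b| ≤ k * |a - b| := by
  rw [abs_sub_le_iff]
  refine ⟨relayG_sub_le ρ₁ ρ₂ k hρ hk a b, ?_⟩
  rw [abs_sub_comm]
  exact relayG_sub_le ρ₁ ρ₂ k hρ hk b a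

lemma primitive_sq {h : ℝ → ℝ} (hh : Integrable h volume) {t : ℝ} (ht : 0 ≤ t) :
    (∫ s in (0:ℝ)..t, h s) ^ 2 = 2 * ∫ s in (0:ℝ)..t, (∫ r in (0:ℝ)..s, h r) * h s := by
  set μ : Measure ℝ := volume.restrict (Ioc (0:ℝ) t) with hμ
  have hhμ : Integrable h μ := hh.restrict
  have hK : Integrable (fun p : ℝ × ℝ => h p.1 * h p.2) (μ.prod μ) := hhμ.mul_prod hhμ
  have hset : MeasurableSet {p : ℝ × ℝ | p.2 ≤ p.1} := measurableSet_le measurable_snd measurable_fst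
  have hset' : MeasurableSet {p : ℝ × ℝ | p.1 < p.2} := measurableSet_lt measurable_fst measurable_snd
  set F : ℝ × ℝ → ℝ := fun p => if p.2 ≤ p.1 then h p.1 * h p.2 else 0 with hF
  set F' : ℝ × ℝ → ℝ := fun p => if p.1 < p.2 then h p.1 * h p.2 else 0 with hF'
  have hFi : Integrable F (μ.prod μ) := by
    have : F = {p : ℝ × ℝ | p.2 ≤ p.1}.indicator (fun p => h p.1 * h p.2) := by
      ext p; simp [hF, Set.indicator_apply, Set.mem_setOf_eq]
    rw [this]; exact hK.indicator hset
  have hF'i : Integrable F' (μ.prod μ) := by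
    have : F' = {p : ℝ × ℝ | p.1 < p.2}.indicator (fun p => h p.1 * h p.2) := by
      ext p; simp [hF', Set.indicator_apply, Set.mem_setOf_eq]
    rw [this]; exact hK.indicator hset'
  have hsplit : (∫ p, F p ∂(μ.prod μ)) + (∫ p, F' p ∂(μ.prod μ)) = (∫ s, h s ∂μ) ^ 2 := by
    rw [← integral_add hFi hF'i]
    rw [show (∫ s, h s ∂μ) ^ 2 = ∫ p : ℝ × ℝ, h p.1 * h p.2 ∂(μ.prod μ) by
      rw [integral_prod_mul]; ring]
    congr 1; ext p
    rcases le_or_gt p.2 p.1 with hc | hc <;>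
      by_cases hc2 : p.1 < p.2 <;> simp [hF, hF', hc, hc.not_gt, hc2]
  have hdiag : (μ.prod μ) {p : ℝ × ℝ | p.1 = p.2} = 0 := by
    rw [Measure.prod_apply (measurableSet_eq_fun measurable_fst measurable_snd)]
    have hx : ∀ x : ℝ, μ (Prod.mk x ⁻¹' {p : ℝ × ℝ | p.1 = p.2}) = 0 := by
      intro x
      have : Prod.mk x ⁻¹' {p : ℝ × ℝ | p.1 = p.2} = {x} := by ext y; simp [eq_comm]
      rw [this]; exact measure_singleton x
    simp [hx]
  have hswap : (∫ p, F' p ∂(μ.prod μ)) = ∫ p, F p ∂(μ.prod μ) := by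
    rw [← integral_prod_swap F']
    refine integral_congr_ae ?_
    rw [Filter.EventuallyEq, ae_iff]
    refine measure_mono_null ?_ hdiag
    intro p hp
    simp only [Set.mem_setOf_eq] at hp ⊢
    by_contra hne
    rcases lt_or_gt_of_ne hne with hc | hc
    · exact hp (by simp [hF, hF', Prod.swap, hc.not_ge, hc.not_gt])
    · exact hp (by simp [hF, hF', Prod.swap, hc, hc.le, mul_comm])
  have hiter : (∫ p, F p ∂(μ.prod μ)) = ∫ s in (0:ℝ)..t, (∫ r in (0:ℝ)..s, h r) * h s := by
    rw [integral_prod F hFi, intervalIntegral.integral_of_le ht]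
    rw [hμ]
    refine setIntegral_congr_fun measurableSet_Ioc ?_
    intro s hs
    have hst : Iic s ∩ Ioc 0 t = Ioc 0 s := by
      rw [Set.inter_comm, Set.Ioc_inter_Iic, min_eq_right hs.2]
    calc ∫ r, F (s, r) ∂μ
        = ∫ r, (Iic s).indicator (fun r => h s * h r) r ∂μ := by
          refine integral_congr_ae (Filter.Eventually.of_forall fun r => ?_)
          simp [hF, Set.indicator_apply, Set.mem_Iic, mul_comm]
      _ = ∫ r in Iic s, h s * h r ∂μ := integral_indicator measurableSet_Iic
      _ = ∫ r in Ioc (0:ℝ) s, h s * h r := by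
          rw [hμ, Measure.restrict_restrict measurableSet_Iic, hst]
      _ = h s * ∫ r in Ioc (0:ℝ) s, h r := integral_const_mul _ _
      _ = (∫ r in (0:ℝ)..s, h r) * h s := by
          rw [intervalIntegral.integral_of_le hs.1.le, mul_comm]
  have hLHS : (∫ s in (0:ℝ)..t, h s) = ∫ s, h s ∂μ := by
    rw [intervalIntegral.integral_of_le ht, hμ]
  rw [hLHS, ← hsplit, hswap, hiter]; ring

/-- Lipschitz continuity of the dynamic relay (Lemma 2.3). -/
theorem dyn_relay_lipschitz (T ρ₁ ρ₂ k : ℝ)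
    (hT : 0 < T) (hρ : ρ₁ < ρ₂) (hk : 0 < k)
    (u₁ u₂ : ℝ → ℝ)
    (hu₁ : MemLp u₁ 2 (volume.restrict (Ioc (0:ℝ) T)))
    (hu₂ : MemLp u₂ 2 (volume.restrict (Ioc (0:ℝ) T)))
    (ξ₁ ξ₂ : ℝ) (hξ₁ : ξ₁ ∈ Icc (-1:ℝ) 1) (hξ₂ : ξ₂ ∈ Icc (-1:ℝ) 1)
    (y₁ y₁' y₂ y₂' : ℝ → ℝ)
    (h₁ : IsDynRelay T ρ₁ ρ₂ k u₁ ξ₁ y₁ y₁')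
    (h₂ : IsDynRelay T ρ₁ ρ₂ k u₂ ξ₂ y₂ y₂') :
    ∀ t ∈ Icc (0:ℝ) T,
      |y₁ t - y₂ t| ≤ Real.exp (T / 2) *
        (|ξ₁ - ξ₂| + k * Real.sqrt (∫ s in (0:ℝ)..T, (u₁ s - u₂ s) ^ 2)) := by
  obtain ⟨hL₁, -, hrep₁, hbd₁, hVI₁⟩ := h₁
  obtain ⟨hL₂, -, hrep₂, hbd₂, hVI₂⟩ := h₂
  haveI : IsFiniteMeasure (volume.restrict (Ioc (0:ℝ) T)) := by
    constructor
    rw [Measure.restrict_apply_univ]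
    exact measure_Ioc_lt_top
  set c : ℝ := ξ₁ - ξ₂ with hc
  have hy1int : IntegrableOn y₁' (Ioc (0:ℝ) T) volume := hL₁.integrable (by norm_num)
  have hy2int : IntegrableOn y₂' (Ioc (0:ℝ) T) volume := hL₂.integrable (by norm_num)
  have hy'int : IntegrableOn (fun s => y₁' s - y₂' s) (Ioc (0:ℝ) T) volume := hy1int.sub hy2int
  set h : ℝ → ℝ := (Ioc (0:ℝ) T).indicator (fun s => y₁' s - y₂' s) with hhdef
  have hh : Integrable h volume := (integrable_indicator_iff measurableSet_Ioc).2 hy'int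
  set H : ℝ → ℝ := fun x => ∫ s in (0:ℝ)..x, h s with hHdef
  have hHcont : Continuous H := hh.continuous_primitive 0
  -- representation of the difference
  have hw : ∀ s ∈ Icc (0:ℝ) T, y₁ s - y₂ s = c + H s := by
    intro s hs
    have h1 : IntegrableOn y₁' (Ioc (0:ℝ) s) volume := hy1int.mono_set (Ioc_subset_Ioc_right hs.2)
    have h2 : IntegrableOn y₂' (Ioc (0:ℝ) s) volume := hy2int.mono_set (Ioc_subset_Ioc_right hs.2)
    have hsub : (∫ r in (0:ℝ)..s, y₁' r) - ∫ r in (0:ℝ)..s, y₂' r = H s := by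
      rw [hHdef]
      simp only
      rw [intervalIntegral.integral_of_le hs.1, intervalIntegral.integral_of_le hs.1,
        intervalIntegral.integral_of_le hs.1, ← integral_sub h1 h2]
      refine setIntegral_congr_fun measurableSet_Ioc fun r hr => ?_
      rw [hhdef]
      exact (Set.indicator_of_mem (Ioc_subset_Ioc_right hs.2 hr)
        (fun s => y₁' s - y₂' s)).symm
    rw [hrep₁ s hs, hrep₂ s hs, hc]
    linarith [hsub]
  set Φ : ℝ → ℝ := fun x => (c + H x) ^ 2 with hΦdef
  have hΦcont : Continuous Φ := (continuous_const.add hHcont).pow 2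
  have hΦ0 : ∀ x, 0 ≤ Φ x := fun x => sq_nonneg _
  set V : ℝ := ∫ s in (0:ℝ)..T, (u₁ s - u₂ s) ^ 2 with hV
  have hsqint : IntegrableOn (fun s => (u₁ s - u₂ s) ^ 2) (Ioc (0:ℝ) T) volume :=
    (hu₁.sub hu₂).integrable_sq
  have hV0 : 0 ≤ V := by
    rw [hV]
    exact intervalIntegral.integral_nonneg hT.le fun s _ => sq_nonneg _
  set A : ℝ := c ^ 2 + k ^ 2 * V with hA
  have hA0 : 0 ≤ A := by positivity
  -- the pointwise a.e. differential inequality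
  have base : ∀ᵐ s ∂(volume.restrict (Ioo (0:ℝ) T)),
      2 * (c + H s) * h s ≤ k ^ 2 * (u₁ s - u₂ s) ^ 2 + Φ s := by
    filter_upwards [hVI₁, hVI₂, ae_restrict_mem measurableSet_Ioo] with s q₁ q₂ hs
    have hsI : s ∈ Icc (0:ℝ) T := ⟨hs.1.le, hs.2.le⟩
    have hz₁ : y₁ s ∈ Icc (-1:ℝ) 1 := abs_le.1 (hbd₁ s hsI)
    have hz₂ : y₂ s ∈ Icc (-1:ℝ) 1 := abs_le.1 (hbd₂ s hsI)
    have e₁ := q₁ (y₂ s) hz₂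
    have e₂ := q₂ (y₁ s) hz₁
    have hgl : |relayG ρ₁ ρ₂ k (u₁ s) - relayG ρ₁ ρ₂ k (u₂ s)| ≤ k * |u₁ s - u₂ s| :=
      relayG_lipschitz ρ₁ ρ₂ k hρ hk.le _ _
    have hhs : h s = y₁' s - y₂' s := by
      rw [hhdef]
      exact Set.indicator_of_mem (Set.mem_Ioc.2 ⟨hs.1, hs.2.le⟩) (fun s => y₁' s - y₂' s)
    have hws : c + H s = y₁ s - y₂ s := (hw s hsI).symm
    rw [hhs, hΦdef]
    simp only
    rw [hws]
    have t1 : (y₁' s - y₂' s) * (y₁ s - y₂ s) ≤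
        (relayG ρ₁ ρ₂ k (u₁ s) - relayG ρ₁ ρ₂ k (u₂ s)) * (y₁ s - y₂ s) := by
      nlinarith [e₁, e₂]
    have t2 : (relayG ρ₁ ρ₂ k (u₁ s) - relayG ρ₁ ρ₂ k (u₂ s)) * (y₁ s - y₂ s)
        ≤ k * |u₁ s - u₂ s| * |y₁ s - y₂ s| := by
      calc (relayG ρ₁ ρ₂ k (u₁ s) - relayG ρ₁ ρ₂ k (u₂ s)) * (y₁ s - y₂ s)
          ≤ |(relayG ρ₁ ρ₂ k (u₁ s) - relayG ρ₁ ρ₂ k (u₂ s)) * (y₁ s - y₂ s)| := le_abs_self _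
        _ = |relayG ρ₁ ρ₂ k (u₁ s) - relayG ρ₁ ρ₂ k (u₂ s)| * |y₁ s - y₂ s| := abs_mul _ _
        _ ≤ k * |u₁ s - u₂ s| * |y₁ s - y₂ s| :=
            mul_le_mul_of_nonneg_right hgl (abs_nonneg _)
    have t3 : 2 * (k * |u₁ s - u₂ s| * |y₁ s - y₂ s|)
        ≤ k ^ 2 * (u₁ s - u₂ s) ^ 2 + (y₁ s - y₂ s) ^ 2 := by
      nlinarith [sq_nonneg (k * |u₁ s - u₂ s| - |y₁ s - y₂ s|), sq_abs (u₁ s - u₂ s),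
        sq_abs (y₁ s - y₂ s)]
    nlinarith [t1, t2, t3]
  -- the key integral inequality
  have key : ∀ t ∈ Icc (0:ℝ) T, Φ t ≤ A + ∫ s in (0:ℝ)..t, Φ s := by
    intro t ht
    have hIh : IntervalIntegrable h volume 0 t := hh.intervalIntegrable
    have hIf : IntervalIntegrable (fun s => 2 * (c + H s) * h s) volume 0 t :=
      hIh.continuousOn_mul ((continuous_const.mul (continuous_const.add hHcont)).continuousOn)
    have hIsq : IntervalIntegrable (fun s => (u₁ s - u₂ s) ^ 2) volume 0 t := by
      rw [intervalIntegrable_iff, uIoc_of_le ht.1]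
      exact hsqint.mono_set (Ioc_subset_Ioc_right ht.2)
    have hIg : IntervalIntegrable (fun s => k ^ 2 * (u₁ s - u₂ s) ^ 2 + Φ s) volume 0 t :=
      (hIsq.const_mul _).add (hΦcont.intervalIntegrable 0 t)
    have base' : ∀ᵐ s ∂(volume.restrict (Icc (0:ℝ) t)),
        2 * (c + H s) * h s ≤ k ^ 2 * (u₁ s - u₂ s) ^ 2 + Φ s := by
      have hIooIcc : volume.restrict (Ioo (0:ℝ) T) = volume.restrict (Icc (0:ℝ) T) :=
        Measure.restrict_congr_set Ioo_ae_eq_Icc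
      have baseT : ∀ᵐ s ∂(volume.restrict (Icc (0:ℝ) T)),
          2 * (c + H s) * h s ≤ k ^ 2 * (u₁ s - u₂ s) ^ 2 + Φ s := by
        rw [← hIooIcc]; exact base
      exact ae_mono (Measure.restrict_mono (Icc_subset_Icc_right ht.2) le_rfl) baseT
    have hint_le : (∫ s in (0:ℝ)..t, 2 * (c + H s) * h s)
        ≤ ∫ s in (0:ℝ)..t, (k ^ 2 * (u₁ s - u₂ s) ^ 2 + Φ s) :=
      intervalIntegral.integral_mono_ae_restrict ht.1 hIf hIg base'
    have hsq_le : (∫ s in (0:ℝ)..t, (u₁ s - u₂ s) ^ 2) ≤ V := by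
      rw [hV]
      have hIsq' : IntervalIntegrable (fun s => (u₁ s - u₂ s) ^ 2) volume t T := by
        rw [intervalIntegrable_iff, uIoc_of_le ht.2]
        exact hsqint.mono_set (Ioc_subset_Ioc_left ht.1)
      rw [← intervalIntegral.integral_add_adjacent_intervals hIsq hIsq']
      have : 0 ≤ ∫ s in t..T, (u₁ s - u₂ s) ^ 2 :=
        intervalIntegral.integral_nonneg ht.2 fun s _ => sq_nonneg _
      linarith
    -- the identity Φ t = c² + ∫ 2(c+H)h
    have e1 : H t = ∫ s in (0:ℝ)..t, h s := by simp only [hHdef]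
    have e2 : (∫ s in (0:ℝ)..t, (∫ r in (0:ℝ)..s, h r) * h s)
        = ∫ s in (0:ℝ)..t, H s * h s := by simp only [hHdef]
    have hPS := primitive_sq hh ht.1
    rw [e2, ← e1] at hPS
    have hIHh : IntervalIntegrable (fun s => 2 * (H s * h s)) volume 0 t :=
      ((hIh.continuousOn_mul hHcont.continuousOn).const_mul 2)
    have hsplit : (∫ s in (0:ℝ)..t, 2 * (c + H s) * h s)
        = (∫ s in (0:ℝ)..t, (2*c) * h s) + ∫ s in (0:ℝ)..t, 2 * (H s * h s) := by
      rw [← intervalIntegral.integral_add (hIh.const_mul _) hIHh]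
      congr 1; ext s; ring
    have hid : Φ t = c ^ 2 + ∫ s in (0:ℝ)..t, 2 * (c + H s) * h s := by
      rw [hsplit, intervalIntegral.integral_const_mul, intervalIntegral.integral_const_mul,
        ← e1, hΦdef]
      simp only
      linear_combination hPS
    have hadd : (∫ s in (0:ℝ)..t, (k ^ 2 * (u₁ s - u₂ s) ^ 2 + Φ s))
        = k ^ 2 * (∫ s in (0:ℝ)..t, (u₁ s - u₂ s) ^ 2) + ∫ s in (0:ℝ)..t, Φ s := by
      rw [intervalIntegral.integral_add (hIsq.const_mul _) (hΦcont.intervalIntegrable 0 t),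
        intervalIntegral.integral_const_mul]
    rw [hid, hA]
    rw [hadd] at hint_le
    nlinarith [hint_le, hsq_le, sq_nonneg k]
  -- Gronwall
  set G : ℝ → ℝ := fun x => ∫ s in (0:ℝ)..x, Φ s with hGdef
  have hGcont : Continuous G :=
    intervalIntegral.continuous_primitive (fun a b => hΦcont.intervalIntegrable a b) 0
  have hGder : ∀ x ∈ Ico (0:ℝ) T, HasDerivWithinAt G (Φ x) (Ici x) x := by
    intro x _
    rw [hGdef]
    exact ((hΦcont.integral_hasStrictDerivAt 0 x).hasDerivAt).hasDerivWithinAt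
  have hG0 : ‖G 0‖ ≤ 0 := by
    rw [hGdef]
    simp
  have hbound : ∀ x ∈ Ico (0:ℝ) T, ‖Φ x‖ ≤ 1 * ‖G x‖ + A := by
    intro x hx
    have hGx0 : 0 ≤ G x := intervalIntegral.integral_nonneg hx.1 fun s _ => hΦ0 s
    rw [Real.norm_eq_abs, Real.norm_eq_abs, abs_of_nonneg (hΦ0 x), abs_of_nonneg hGx0, one_mul]
    have := key x ⟨hx.1, hx.2.le⟩
    linarith
  have hgron := norm_le_gronwallBound_of_norm_deriv_right_le hGcont.continuousOn hGder hG0 hbound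
  -- conclude
  intro t ht
  have hGt : G t ≤ A * (Real.exp t - 1) := by
    have := hgron t ht
    rw [Real.norm_eq_abs] at this
    have h2 : gronwallBound 0 1 A (t - 0) = A * (Real.exp t - 1) := by
      rw [gronwallBound_of_K_ne_0 one_ne_zero]
      simp
    rw [h2] at this
    exact (le_abs_self _).trans this
  have hΦt : Φ t ≤ A * Real.exp T := by
    have h3 := key t ht
    have h4 : Real.exp t ≤ Real.exp T := Real.exp_le_exp.2 ht.2
    have h5 : (∫ s in (0:ℝ)..t, Φ s) = G t := by simp only [hGdef]
    nlinarith [hGt, hA0, Real.exp_pos t]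
  have hwt : |y₁ t - y₂ t| = Real.sqrt (Φ t) := by
    rw [hw t ht, hΦdef]
    simp only
    rw [Real.sqrt_sq_eq_abs]
  rw [hwt]
  have hstep1 : Real.sqrt (Φ t) ≤ Real.sqrt (A * Real.exp T) := Real.sqrt_le_sqrt hΦt
  have hexp : Real.sqrt (Real.exp T) = Real.exp (T / 2) := by
    rw [show Real.exp T = Real.exp (T / 2) ^ 2 by
      rw [sq, ← Real.exp_add]; ring_nf]
    exact Real.sqrt_sq (Real.exp_pos _).le
  have hstep2 : Real.sqrt (A * Real.exp T) = Real.sqrt A * Real.exp (T / 2) := by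
    rw [Real.sqrt_mul hA0, hexp]
  have hstep3 : Real.sqrt A ≤ |c| + k * Real.sqrt V := by
    have hAle : A ≤ (|c| + k * Real.sqrt V) ^ 2 := by
      have hsV : Real.sqrt V ^ 2 = V := Real.sq_sqrt hV0
      have h6 : 0 ≤ |c| * (k * Real.sqrt V) :=
        mul_nonneg (abs_nonneg _) (mul_nonneg hk.le (Real.sqrt_nonneg _))
      nlinarith [sq_abs c]
    calc Real.sqrt A ≤ Real.sqrt ((|c| + k * Real.sqrt V) ^ 2) := Real.sqrt_le_sqrt hAle
      _ = |c| + k * Real.sqrt V := Real.sqrt_sq (by positivity)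
  calc Real.sqrt (Φ t) ≤ Real.sqrt A * Real.exp (T / 2) := by rw [← hstep2]; exact hstep1
    _ ≤ (|c| + k * Real.sqrt V) * Real.exp (T / 2) :=
        mul_le_mul_of_nonneg_right hstep3 (Real.exp_pos _).le
    _ = Real.exp (T / 2) * (|ξ₁ - ξ₂| + k * Real.sqrt (∫ s in (0:ℝ)..T, (u₁ s - u₂ s) ^ 2)) := by
        rw [hc, hV]; ring
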